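/- Let β, γ > 0 and let S, I : ℝ → ℝ be differentiable on [0, ∞) with S'(t) = -β·S(t)·I(t) + γ·I(t) and I'(t) = β·S(t)·I(t) - γ·I(t) for all t ≥ 0, S(0) ≥ 0, I(0) > 0, and set N = S(0) + I(0). If N·β ≤ γ (i.e., the basic reproduction number R₀ = Nβ/γ ≤ 1), then I(t) → 0 and S(t) → N as t → ∞. -/

import Mathlib

open Set Filter

/-- SIS ODE with mass action: if `R₀ = Nβ/γ ≤ 1` (i.e. `Nβ ≤ γ`), the disease-free
equilibrium `(N, 0)` is globally attractive: `I(t) → 0` and `S(t) → N`. -/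
theorem stmt_4 (β γ : ℝ) (hβ : 0 < β) (hγ : 0 < γ) (S I : ℝ → ℝ)
    (hS : ∀ t ∈ Set.Ici (0 : ℝ),
      HasDerivWithinAt S (-β * S t * I t + γ * I t) (Set.Ici 0) t)
    (hI : ∀ t ∈ Set.Ici (0 : ℝ),
      HasDerivWithinAt I (β * S t * I t - γ * I t) (Set.Ici 0) t)
    (hS0 : 0 ≤ S 0) (hI0 : 0 < I 0) (N : ℝ) (hN : N = S 0 + I 0)
    (hR0 : N * β ≤ γ) :
    Filter.Tendsto I Filter.atTop (nhds 0) ∧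
      Filter.Tendsto S Filter.atTop (nhds N) := by
  have hScont : ContinuousOn S (Ici 0) := fun x hx => (hS x hx).continuousWithinAt
  have hIcont : ContinuousOn I (Ici 0) := fun x hx => (hI x hx).continuousWithinAt
  -- Step 1: S + I is constant, equal to N
  have hSI : ∀ t ∈ Ici (0:ℝ), S t + I t = N := by
    intro t ht
    have hconst := constant_of_has_deriv_right_zero (f := fun u => S u + I u) (a := 0) (b := t)
      ((hScont.mono Icc_subset_Ici_self).add (hIcont.mono Icc_subset_Ici_self))
      (fun x hx => by
        have hx0 : x ∈ Ici (0:ℝ) := hx.1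
        have := ((hS x hx0).add (hI x hx0)).mono (Ici_subset_Ici.mpr hx.1)
        convert this using 1
        · rfl
        ring)
      t (by exact ⟨ht, le_refl t⟩)
    simpa [hN] using hconst
  -- Step 2: I stays positive
  have hpos : ∀ t ∈ Ici (0:ℝ), 0 < I t := by
    by_contra h
    push_neg at h
    obtain ⟨T, hT, hIT⟩ := h
    have h0T : (0:ℝ) ≤ T := hT
    have hivt := intermediate_value_Icc' h0T (hIcont.mono (Icc_subset_Ici_self))
    have h0mem : (0:ℝ) ∈ Icc (I T) (I 0) := ⟨hIT, hI0.le⟩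
    obtain ⟨t₁, ht₁mem, ht₁⟩ := hivt h0mem
    have ht₁pos : 0 < t₁ := by
      rcases lt_or_eq_of_le ht₁mem.1 with h' | h'
      · exact h'
      · exfalso; rw [← h'] at ht₁; linarith
    -- bound for the coefficient
    obtain ⟨C, hC⟩ := (isCompact_Icc (a := (0:ℝ)) (b := t₁)).exists_bound_of_continuousOn
      (f := fun u => β * S u - γ)
      ((continuousOn_const.mul (hScont.mono Icc_subset_Ici_self)).sub continuousOn_const)
    set K : NNReal := C.toNNReal with hK
    set clamp : ℝ → ℝ := fun u => max 0 (min u t₁) with hclamp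
    have hclampmem : ∀ u, clamp u ∈ Icc 0 t₁ :=
      fun u => ⟨le_max_left _ _, max_le ht₁pos.le (min_le_right _ _)⟩
    set v : ℝ → ℝ → ℝ := fun u x => (β * S (clamp u) - γ) * x with hv_def
    have hv : ∀ u, LipschitzOnWith K (v u) univ := by
      intro u
      apply LipschitzOnWith.of_dist_le_mul
      intro x _ y _
      have hb : ‖β * S (clamp u) - γ‖ ≤ C := hC _ (hclampmem u)
      have hKC : |β * S (clamp u) - γ| ≤ (K : ℝ) := by
        rw [hK, Real.coe_toNNReal']
        exact le_trans (by simpa [Real.norm_eq_abs] using hb) (le_max_left _ _)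
      simp only [hv_def, Real.dist_eq, ← mul_sub, abs_mul]
      exact mul_le_mul_of_nonneg_right hKC (abs_nonneg _)
    have huniq := ODE_solution_unique_of_mem_Icc_left (v := v) (s := fun _ => univ) (fun u _ => hv u)
      (f := I) (g := fun _ => (0:ℝ)) (a := 0) (b := t₁)
      (hIcont.mono Icc_subset_Ici_self)
      (fun u hu => by
        have hu0 : u ∈ Ici (0:ℝ) := mem_Ici.mpr (le_of_lt hu.1)
        have hder : HasDerivWithinAt I (β * S u * I u - γ * I u) (Iic u) u :=
          (hI u hu0).mono_of_mem_nhdsWithin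
          (mem_nhdsWithin_of_mem_nhds (Ici_mem_nhds hu.1))
        have hcl : clamp u = u := by
          simp only [hclamp]
          rw [min_eq_left hu.2, max_eq_right hu0]
        refine hder.congr_deriv ?_
        simp only [hv_def, hcl]
        ring)
      (fun _ _ => mem_univ _)
      continuousOn_const
      (fun u hu => by
        have : v u 0 = 0 := by simp [hv_def]
        rw [this]; exact hasDerivWithinAt_const _ _ _)
      (fun _ _ => mem_univ _)
      (by simpa using ht₁)
    have : I 0 = 0 := huniq ⟨le_refl 0, ht₁pos.le⟩
    linarith
  -- Step 3: (1/I - βt) is monotone on [0,∞)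
  set ψ : ℝ → ℝ := fun t => (I t)⁻¹ - β * t with hψ
  have hψderiv : ∀ x ∈ Ioi (0:ℝ), HasDerivAt ψ ((γ - β * N) / I x) x := by
    intro x hx
    have hx0 : x ∈ Ici (0:ℝ) := mem_Ici.mpr (le_of_lt hx)
    have hIx : 0 < I x := hpos x hx0
    have hIat : HasDerivAt I (β * S x * I x - γ * I x) x :=
      (hI x hx0).hasDerivAt (Ici_mem_nhds hx)
    have hinv := hIat.inv (ne_of_gt hIx)
    have hlin : HasDerivAt (fun t : ℝ => β * t) β x := by
      simpa using (hasDerivAt_id x).const_mul β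
    have := hinv.sub hlin
    refine (this : HasDerivAt ψ _ x).congr_deriv ?_
    have hSx : S x = N - I x := by have := hSI x hx0; linarith
    rw [hSx]
    field_simp
    ring
  have hψmono : MonotoneOn ψ (Ici 0) := by
    apply monotoneOn_of_deriv_nonneg (convex_Ici 0)
    · exact ((hIcont.inv₀ (fun x hx => ne_of_gt (hpos x hx))).sub
        (continuous_const.mul continuous_id).continuousOn)
    · intro x hx
      rw [interior_Ici] at hx
      exact (hψderiv x hx).differentiableAt.differentiableWithinAt
    · intro x hx
      rw [interior_Ici] at hx
      rw [(hψderiv x hx).deriv]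
      exact div_nonneg (by linarith) (hpos x (mem_Ici.mpr (le_of_lt hx))).le
  -- Step 4: I t ≤ ((I 0)⁻¹ + β t)⁻¹ for t ≥ 0
  have hbound : ∀ t ∈ Ici (0:ℝ), I t ≤ ((I 0)⁻¹ + β * t)⁻¹ := by
    intro t ht
    have h1 := hψmono (self_mem_Ici) ht ht
    simp only [hψ, mul_zero, sub_zero] at h1
    have hIt : 0 < I t := hpos t ht
    have hden : 0 < (I 0)⁻¹ + β * t := by
      have h3 : 0 < (I 0)⁻¹ := inv_pos.mpr hI0
      have h4 : 0 ≤ β * t := mul_nonneg hβ.le ht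
      linarith
    have h2 : (I 0)⁻¹ + β * t ≤ (I t)⁻¹ := by linarith
    calc I t = ((I t)⁻¹)⁻¹ := (inv_inv _).symm
      _ ≤ ((I 0)⁻¹ + β * t)⁻¹ := by
          exact inv_anti₀ hden h2
  -- Conclude
  have htendI : Tendsto I atTop (nhds 0) := by
    have hg : Tendsto (fun t => ((I 0)⁻¹ + β * t)⁻¹) atTop (nhds 0) := by
      apply Tendsto.inv_tendsto_atTop
      apply tendsto_atTop_add_const_left
      exact (tendsto_id.const_mul_atTop hβ)
    apply squeeze_zero' (t₀ := atTop)
    · filter_upwards [eventually_ge_atTop (0:ℝ)] with t ht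
      exact (hpos t ht).le
    · filter_upwards [eventually_ge_atTop (0:ℝ)] with t ht
      exact hbound t ht
    · exact hg
  refine ⟨htendI, ?_⟩
  have : Tendsto (fun t => N - I t) atTop (nhds N) := by
    simpa using tendsto_const_nhds.sub htendI
  apply this.congr'
  filter_upwards [eventually_ge_atTop (0:ℝ)] with t ht
  have := hSI t ht
  linarith
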